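/- For any finite Borel measure F on ℝ with F({0}) = 0, the class D_c1 := {x ↦ x φ'(x) : φ ∈ C_c1} is dense in L²(F). -/

import Mathlib

open MeasureTheory Filter Set
open scoped ENNReal Topology
noncomputable section

/-- `φ` is differentiable with continuous, compactly supported derivative. -/
def Cc1 (φ : ℝ → ℝ) : Prop :=
  Differentiable ℝ φ ∧ Continuous (deriv φ) ∧ HasCompactSupport (deriv φ)


theorem Dc1_dense_L2 (F : Measure ℝ) [IsFiniteMeasure F] (h0 : F {0} = 0)
    (h : ℝ → ℝ) (hh : MemLp h 2 F) :
    ∀ ε : ℝ, 0 < ε → ∃ φ : ℝ → ℝ, Cc1 φ ∧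
      eLpNorm (fun x => h x - x * deriv φ x) 2 F < ENNReal.ofReal ε := by
  intro ε hε
  have hε3 : (0 : ℝ) < ε / 3 := by linarith
  -- Step 1: approximate h by a continuous compactly supported g
  obtain ⟨g, g_supp, hg_close, g_cont, g_mem⟩ :=
    hh.exists_hasCompactSupport_eLpNorm_sub_le (p := 2) (by norm_num)
      (ε := ENNReal.ofReal (ε / 3)) (by simp [hε3.le, ENNReal.ofReal_eq_zero]; linarith)
  obtain ⟨M, hM⟩ := g_supp.exists_bound_of_continuous g_cont
  have hM0 : (0 : ℝ) ≤ M := le_trans (norm_nonneg _) (hM 0)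
  -- Step 2: choose δ with F (closedBall 0 (2δ)) small
  set c : ℝ≥0∞ := ENNReal.ofReal (ε / 3) / ENNReal.ofReal (M + 1) with hc
  have hMne : ENNReal.ofReal (M + 1) ≠ 0 := by
    simp [ENNReal.ofReal_eq_zero]; linarith
  have hcpos : 0 < c := by
    apply ENNReal.div_pos (by simp [ENNReal.ofReal_eq_zero]; linarith) (by simp)
  have hB : Tendsto (fun n : ℕ => F (Metric.closedBall 0 (2 / (n + 1)))) atTop (𝓝 (F {0})) := by
    have hInter : (⋂ n : ℕ, Metric.closedBall (0:ℝ) (2 / (n + 1))) = {0} := by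
      ext x
      simp only [Set.mem_iInter, Metric.mem_closedBall, dist_zero_right, Set.mem_singleton_iff,
        Real.norm_eq_abs]
      constructor
      · intro hx
        by_contra hx0
        have habs : 0 < |x| := abs_pos.mpr hx0
        obtain ⟨n, hn⟩ := exists_nat_gt (2 / |x|)
        have hn1 : 2 / |x| < (n : ℝ) + 1 := by linarith
        have := hx n
        have h1 : (2 : ℝ) / ((n : ℝ) + 1) < |x| := by
          rw [div_lt_iff₀ (by positivity)]
          rw [div_lt_iff₀ habs] at hn1
          linarith
        linarith
      · rintro rfl; intro n; simp; positivity
    have := tendsto_measure_iInter_atTop (μ := F)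
      (s := fun n : ℕ => Metric.closedBall 0 (2 / (n + 1)))
      (fun n => measurableSet_closedBall.nullMeasurableSet)
      (fun i j hij => by
        apply Metric.closedBall_subset_closedBall
        gcongr)
      ⟨0, measure_ne_top _ _⟩
    rwa [hInter] at this
  rw [h0] at hB
  have hev : ∀ᶠ n : ℕ in atTop, F (Metric.closedBall 0 (2 / (n + 1))) < c ^ (2:ℝ) := by
    apply hB.eventually_lt_const
    exact ENNReal.rpow_pos hcpos (by
      rw [hc]
      exact (ENNReal.div_lt_top ENNReal.ofReal_ne_top hMne).ne)
  obtain ⟨n, hn⟩ := hev.exists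
  set δ : ℝ := 1 / (n + 1) with hδdef
  have hδpos : 0 < δ := by positivity
  have hFB : F (Metric.closedBall 0 (2 * δ)) < c ^ (2:ℝ) := by
    have : 2 * δ = 2 / ((n:ℝ) + 1) := by rw [hδdef]; ring
    rwa [this]
  -- Step 3: the cutoff and the function φ
  set χ : ℝ → ℝ := fun x => min 1 (max (|x| - δ) 0 / δ) with hχdef
  have hχ_cont : Continuous χ := by
    apply continuous_const.min
    exact (((continuous_abs.sub continuous_const).max continuous_const).div_const δ)
  have hχ_zero : ∀ x : ℝ, |x| ≤ δ → χ x = 0 := by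
    intro x hx
    have : max (|x| - δ) 0 = 0 := max_eq_right (by linarith)
    simp [hχdef, this]
  have hχ_one : ∀ x : ℝ, 2 * δ ≤ |x| → χ x = 1 := by
    intro x hx
    have h1 : (1:ℝ) ≤ (|x| - δ) / δ := by
      rw [le_div_iff₀ hδpos]; linarith
    have : max (|x| - δ) 0 = |x| - δ := max_eq_left (by linarith [abs_nonneg x])
    rw [hχdef]
    simp only [this]
    exact min_eq_left h1
  have hχ_mem : ∀ x : ℝ, 0 ≤ χ x ∧ χ x ≤ 1 := by
    intro x
    constructor
    · apply le_min (by norm_num)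
      positivity
    · exact min_le_left _ _
  set u : ℝ → ℝ := fun x => g x * χ x / x with hudef
  have hu_cont : Continuous u := by
    rw [continuous_iff_continuousAt]
    intro x
    rcases lt_or_ge (|x|) δ with hx | hx
    · -- u is 0 near x
      have hnhds : ∀ᶠ y in 𝓝 x, u y = 0 := by
        have : ∀ᶠ y in 𝓝 x, |y| < δ :=
          (continuous_abs.continuousAt).eventually_lt continuousAt_const hx
        filter_upwards [this] with y hy
        simp [hudef, hχ_zero y hy.le]
      have h0' : ContinuousAt (fun _ : ℝ => (0:ℝ)) x := continuousAt_const
      exact h0'.congr (hnhds.mono fun y hy => hy.symm)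
    · have hx0 : x ≠ 0 := by
        intro hx0; rw [hx0] at hx; simp at hx; linarith
      exact ((g_cont.continuousAt.mul hχ_cont.continuousAt).div continuousAt_id hx0)
  have hu_supp : HasCompactSupport u := by
    apply g_supp.mono
    intro x hx
    simp only [Function.mem_support, hudef] at hx ⊢
    intro hgx
    apply hx
    rw [hgx]; ring_nf
  set φ : ℝ → ℝ := fun x => ∫ t in (0:ℝ)..x, u t with hφdef
  have hderiv : deriv φ = u := funext fun x => hu_cont.deriv_integral u 0 x
  have hφdiff : Differentiable ℝ φ := fun x =>
    ((hu_cont.integral_hasStrictDerivAt 0 x).hasDerivAt).differentiableAt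
  refine ⟨φ, ⟨hφdiff, by rw [hderiv]; exact hu_cont, by rw [hderiv]; exact hu_supp⟩, ?_⟩
  -- Step 4: x * deriv φ x = g x * χ x
  have hkey : ∀ x : ℝ, x * deriv φ x = g x * χ x := by
    intro x
    rw [hderiv]
    rcases eq_or_ne x 0 with rfl | hx0
    · simp [hudef, hχ_zero 0 (by simp [hδpos.le])]
    · rw [hudef]
      field_simp
  have hfun : (fun x => h x - x * deriv φ x) = fun x => h x - g x * χ x := by
    funext x; rw [hkey]
  rw [hfun]
  -- Step 5: bound eLpNorm (g - gχ)
  set B : Set ℝ := Metric.closedBall (0:ℝ) (2 * δ) with hBdef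
  have hbound : ∀ x : ℝ, ‖g x - g x * χ x‖ ≤ ‖B.indicator (fun _ => M + 1) x‖ := by
    intro x
    by_cases hx : x ∈ B
    · rw [Set.indicator_of_mem hx]
      have h1 : g x - g x * χ x = g x * (1 - χ x) := by ring
      rw [h1, Real.norm_eq_abs, abs_mul]
      have h2 : |1 - χ x| ≤ 1 := by
        rw [abs_le]
        constructor <;> [linarith [(hχ_mem x).2]; linarith [(hχ_mem x).1]]
      have h3 : |g x| ≤ M := by rw [← Real.norm_eq_abs]; exact hM x
      calc |g x| * |1 - χ x| ≤ M * 1 := by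
            apply mul_le_mul h3 h2 (abs_nonneg _) hM0
        _ ≤ ‖M + 1‖ := by rw [Real.norm_eq_abs, abs_of_nonneg (by linarith)]; linarith
    · rw [Set.indicator_of_notMem hx]
      have hxB : 2 * δ ≤ |x| := by
        simp only [hBdef, Metric.mem_closedBall, dist_zero_right, Real.norm_eq_abs, not_le] at hx
        linarith
      rw [hχ_one x hxB]
      simp
  have hgχ : eLpNorm (fun x => g x - g x * χ x) 2 F < ENNReal.ofReal (ε / 3) := by
    calc eLpNorm (fun x => g x - g x * χ x) 2 F
        ≤ eLpNorm (B.indicator (fun _ => M + 1)) 2 F := eLpNorm_mono hbound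
      _ = ‖M + 1‖ₑ * F B ^ (1 / (2:ℝ≥0∞).toReal) :=
          eLpNorm_indicator_const₀ measurableSet_closedBall.nullMeasurableSet (by norm_num)
            (by norm_num)
      _ = ENNReal.ofReal (M + 1) * F B ^ ((1:ℝ) / 2) := by
          rw [← Real.enorm_eq_ofReal (by linarith)]
          norm_num
      _ < ENNReal.ofReal (M + 1) * c := by
          apply ENNReal.mul_lt_mul_iff_right hMne ENNReal.ofReal_ne_top |>.mpr
          calc F B ^ ((1:ℝ)/2) < (c ^ (2:ℝ)) ^ ((1:ℝ)/2) := by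
                apply ENNReal.rpow_lt_rpow hFB (by norm_num)
            _ = c := by
                rw [← ENNReal.rpow_mul]
                norm_num
      _ = ENNReal.ofReal (ε / 3) := by
          rw [hc, ENNReal.mul_div_cancel hMne ENNReal.ofReal_ne_top]
  -- Step 6: triangle inequality
  have hsplit : (fun x => h x - g x * χ x)
      = (fun x => h x - g x) + fun x => g x - g x * χ x := by
    funext x; simp [Pi.add_apply]
  rw [hsplit]
  calc eLpNorm ((fun x => h x - g x) + fun x => g x - g x * χ x) 2 F
      ≤ eLpNorm (fun x => h x - g x) 2 F + eLpNorm (fun x => g x - g x * χ x) 2 F := by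
        apply eLpNorm_add_le
        · exact (hh.sub g_mem).aestronglyMeasurable
        · exact (g_cont.sub (g_cont.mul hχ_cont)).aestronglyMeasurable
        · norm_num
    _ < ENNReal.ofReal (ε / 3) + ENNReal.ofReal (ε / 3) := by
        apply ENNReal.add_lt_add_of_le_of_lt _ _ hgχ
        · exact ((hh.sub g_mem).eLpNorm_lt_top).ne
        · exact le_trans (le_of_eq rfl) hg_close
    _ < ENNReal.ofReal ε := by
        rw [← ENNReal.ofReal_add hε3.le hε3.le]
        exact (ENNReal.ofReal_lt_ofReal_iff hε).mpr (by linarith)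
  -- end
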